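/- Let Y > 0 be a random variable with a continuous density p on (0, ∞) and survival function S_Y(t) = P(Y > t), let L : ℝ → ℝ be continuously differentiable, nondecreasing, with L and L′ bounded and L′ continuous, and let f : ℝ → ℝ be continuously differentiable with f′ continuous. Define π(s) = ∫₀^s S_Y(t) dt and 𝔏(s) = E[L(min(Y, s)/Y − f(π(s)))]. Then 𝔏 is differentiable on (0, ∞) with 𝔏′(s) = −S_Y(s)·f′(π(s))·(1 − S_Y(s))·L′(1 − f(π(s))) + ∫_s^∞ L′(s/t − f(π(s)))·[1/t − S_Y(s)·f′(π(s))]·p(t) dt. -/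

import Mathlib

open MeasureTheory Set Metric
open scoped ENNReal NNReal Topology

/-- Survival function `S_Y(t) = P(Y > t)` of a random variable `Y`. -/
noncomputable def survival {Ω : Type*} [MeasurableSpace Ω] (μ : Measure Ω)
    (Y : Ω → ℝ) (t : ℝ) : ℝ :=
  (μ {ω | t < Y ω}).toReal

/-- Pure premium `π(s) = ∫₀^s S_Y(t) dt = E[min(Y, s)]` of the capped contract. -/
noncomputable def cappedPremium {Ω : Type*} [MeasurableSpace Ω] (μ : Measure Ω)
    (Y : Ω → ℝ) (s : ℝ) : ℝ :=
  ∫ t in Ioc (0:ℝ) s, survival μ Y t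

/-- Objective `𝔏(s) = E[L(min(Y, s)/Y − f(π(s)))]` of the capped contract. -/
noncomputable def cappedObjective {Ω : Type*} [MeasurableSpace Ω] (μ : Measure Ω)
    (Y : Ω → ℝ) (L f : ℝ → ℝ) (s : ℝ) : ℝ :=
  ∫ ω, L (min (Y ω) s / Y ω - f (cappedPremium μ Y s)) ∂μ

/-- differentiability of the objective `𝔏` of the capped contract and
the formula `𝔏′(s) = −S_Y(s)·f′(π(s))·(1 − S_Y(s))·L′(1 − f(π(s)))
+ ∫_s^∞ L′(s/t − f(π(s)))·[1/t − S_Y(s)·f′(π(s))]·p(t) dt`, for a positive loss `Y`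
with continuous density `p` on `(0, ∞)`. -/
theorem statement7 {Ω : Type*} [MeasurableSpace Ω]
    (μ : Measure Ω) [IsProbabilityMeasure μ]
    (Y : Ω → ℝ) (hY : Measurable Y)
    (p : ℝ → ℝ) (hpcont : ContinuousOn p (Ioi 0)) (hpnn : ∀ t, 0 ≤ p t)
    (hdens : μ.map Y
      = (volume.restrict (Ioi (0:ℝ))).withDensity (fun t => ENNReal.ofReal (p t)))
    (L : ℝ → ℝ) (hL : ContDiff ℝ 1 L) (hLmono : Monotone L)
    (hLbdd : ∃ M, ∀ x, |L x| ≤ M) (hL'bdd : ∃ M, ∀ x, |deriv L x| ≤ M)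
    (f : ℝ → ℝ) (hf : ContDiff ℝ 1 f) :
    ∀ s : ℝ, 0 < s →
      HasDerivAt (cappedObjective μ Y L f)
        (-(survival μ Y s) * deriv f (cappedPremium μ Y s)
            * (1 - survival μ Y s) * deriv L (1 - f (cappedPremium μ Y s))
          + ∫ t in Ioi s,
              deriv L (s / t - f (cappedPremium μ Y s))
                * (1 / t - survival μ Y s * deriv f (cappedPremium μ Y s)) * p t)
        s := by
  intro s hs
  have hpmeas : AEMeasurable p (volume.restrict (Ioi (0:ℝ))) :=
    hpcont.aemeasurable measurableSet_Ioi
  have hpsm : AEStronglyMeasurable p (volume.restrict (Ioi (0:ℝ))) :=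
    hpmeas.aestronglyMeasurable
  have htotal : ∫⁻ t in Ioi (0:ℝ), ENNReal.ofReal (p t) = 1 := by
    have h1 : μ.map Y Set.univ = 1 := by
      rw [Measure.map_apply hY MeasurableSet.univ]; simp
    rw [hdens] at h1
    simpa [withDensity_apply _ MeasurableSet.univ, Measure.restrict_univ] using h1
  have hpint : IntegrableOn p (Ioi (0:ℝ)) volume := by
    refine ⟨hpsm, ?_⟩
    rw [hasFiniteIntegral_iff_ofReal (ae_of_all _ hpnn), htotal]
    exact ENNReal.one_lt_top
  have hpval : ∫ t in Ioi (0:ℝ), p t = 1 := by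
    rw [integral_eq_lintegral_of_nonneg_ae (ae_of_all _ hpnn) hpsm, htotal]
    simp
  have hsurv : ∀ u : ℝ, 0 ≤ u → survival μ Y u = ∫ t in Ioi u, p t := by
    intro u hu
    have h1 : μ {ω | u < Y ω} = (μ.map Y) (Ioi u) := by
      rw [Measure.map_apply hY measurableSet_Ioi]; rfl
    have hres : (volume.restrict (Ioi (0:ℝ))).restrict (Ioi u) = volume.restrict (Ioi u) := by
      rw [Measure.restrict_restrict measurableSet_Ioi, Ioi_inter_Ioi, sup_eq_left.2 hu]
    have hint : IntegrableOn p (Ioi u) volume := hpint.mono_set (Ioi_subset_Ioi hu)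
    rw [survival, h1, hdens, withDensity_apply _ measurableSet_Ioi]
    rw [show ∫⁻ t in Ioi u, ENNReal.ofReal (p t) ∂(volume.restrict (Ioi (0:ℝ)))
        = ∫⁻ t in Ioi u, ENNReal.ofReal (p t) from by rw [hres]]
    rw [← ofReal_integral_eq_lintegral_ofReal hint (ae_of_all _ hpnn),
      ENNReal.toReal_ofReal (setIntegral_nonneg measurableSet_Ioi fun t _ => hpnn t)]
  -- survival basic properties
  have hS0 : ∀ u, 0 ≤ survival μ Y u := fun u => ENNReal.toReal_nonneg
  have hSle : ∀ u, survival μ Y u ≤ 1 := by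
    intro u
    have h1 : μ {ω | u < Y ω} ≤ 1 := prob_le_one
    rw [survival]
    exact ENNReal.toReal_le_of_le_ofReal zero_le_one (by simpa using h1)
  have hSanti : Antitone (survival μ Y) := by
    intro a b hab
    exact ENNReal.toReal_mono (measure_ne_top μ _)
      (measure_mono fun ω h => lt_of_le_of_lt hab h)
  have hSmeas : Measurable (survival μ Y) := hSanti.measurable
  have hSIoc : ∀ a b : ℝ, IntegrableOn (survival μ Y) (Ioc a b) volume := by
    intro a b
    apply Integrable.mono' (g := fun _ => (1:ℝ))
    · exact integrableOn_const measure_Ioc_lt_top.ne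
    · exact hSmeas.aestronglyMeasurable.restrict
    · exact ae_of_all _ fun t => by
        rw [Real.norm_eq_abs, abs_of_nonneg (hS0 t)]; exact hSle t
  have hSint : ∀ a b : ℝ, IntervalIntegrable (survival μ Y) volume a b := by
    intro a b
    rw [intervalIntegrable_iff]
    exact (hSIoc _ _)
  -- split of total mass
  have hsplit : ∀ u : ℝ, 0 < u → (∫ t in Ioc 0 u, p t) + ∫ t in Ioi u, p t = 1 := by
    intro u hu
    have h := setIntegral_union (f := p) (μ := volume) (Ioc_disjoint_Ioi (le_refl u))
      measurableSet_Ioi (hpint.mono_set Ioc_subset_Ioi_self)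
      (hpint.mono_set (Ioi_subset_Ioi hu.le))
    rw [Ioc_union_Ioi_eq_Ioi hu.le, hpval] at h
    linarith
  -- premium = interval integral
  have hprem_eq : ∀ u : ℝ, 0 < u → cappedPremium μ Y u = ∫ x in (0:ℝ)..u, survival μ Y x := by
    intro u hu; rw [intervalIntegral.integral_of_le hu.le, cappedPremium]
  -- FTC for the primitive of p at s
  have hprim : HasDerivAt (fun u => ∫ x in (0:ℝ)..u, p x) (p s) s := by
    apply intervalIntegral.integral_hasDerivAt_right
    · rw [intervalIntegrable_iff, uIoc_of_le hs.le]
      exact hpint.mono_set Ioc_subset_Ioi_self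
    · exact ⟨Ioi 0, Ioi_mem_nhds hs, hpsm⟩
    · exact hpcont.continuousAt (Ioi_mem_nhds hs)
  have hSrepr : ∀ u : ℝ, 0 < u → survival μ Y u = 1 - ∫ x in (0:ℝ)..u, p x := by
    intro u hu
    rw [hsurv u hu.le]
    have h2 : ∫ x in (0:ℝ)..u, p x = ∫ t in Ioc 0 u, p t :=
      intervalIntegral.integral_of_le hu.le
    rw [h2]
    linarith [hsplit u hu]
  have hScont : ContinuousAt (survival μ Y) s := by
    apply (continuousAt_const.sub hprim.continuousAt).congr
    filter_upwards [Ioi_mem_nhds hs] with u hu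
    exact (hSrepr u hu).symm
  -- derivative of the premium
  have hπderiv : HasDerivAt (cappedPremium μ Y) (survival μ Y s) s := by
    have hprimS : HasDerivAt (fun u => ∫ x in (0:ℝ)..u, survival μ Y x) (survival μ Y s) s := by
      apply intervalIntegral.integral_hasDerivAt_right (hSint 0 s)
      · exact ⟨univ, Filter.univ_mem, hSmeas.aestronglyMeasurable.restrict⟩
      · exact hScont
    apply hprimS.congr_of_eventuallyEq
    filter_upwards [Ioi_mem_nhds hs] with u hu
    exact hprem_eq u hu
  -- premium differences, bounds, Lipschitz on positives
  have hπbd : ∀ c d : ℝ, c ≤ d → ∫ t in Ioc c d, survival μ Y t ≤ d - c := by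
    intro c d hcd
    have h1 := norm_setIntegral_le_of_norm_le_const (μ := volume) (s := Ioc c d)
      (f := survival μ Y) (C := 1) measure_Ioc_lt_top
      (fun x _ => by rw [Real.norm_eq_abs, abs_of_nonneg (hS0 x)]; exact hSle x)
    rw [Real.volume_real_Ioc_of_le hcd, one_mul] at h1
    exact le_trans (le_abs_self _) h1
  have hπnn : ∀ c d : ℝ, 0 ≤ ∫ t in Ioc c d, survival μ Y t :=
    fun c d => setIntegral_nonneg measurableSet_Ioc fun t _ => hS0 t
  have hπsub : ∀ x y : ℝ, 0 < x → x ≤ y →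
      cappedPremium μ Y y - cappedPremium μ Y x = ∫ t in Ioc x y, survival μ Y t := by
    intro x y hx hxy
    rw [cappedPremium, cappedPremium, ← Ioc_union_Ioc_eq_Ioc hx.le hxy,
      setIntegral_union (Ioc_disjoint_Ioc_of_le le_rfl) measurableSet_Ioc (hSIoc 0 x) (hSIoc x y)]
    ring
  have hπlip : ∀ x y : ℝ, 0 < x → 0 < y →
      |cappedPremium μ Y x - cappedPremium μ Y y| ≤ |x - y| := by
    have key : ∀ x y : ℝ, 0 < x → x ≤ y →
        |cappedPremium μ Y x - cappedPremium μ Y y| ≤ |x - y| := by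
      intro x y hx hxy
      have h1 := hπsub x y hx hxy
      have h2 := hπbd x y hxy
      have h3 := hπnn x y
      rw [abs_sub_comm, abs_of_nonneg (by linarith), abs_sub_comm,
        abs_of_nonneg (sub_nonneg.2 hxy)]
      linarith
    intro x y hx hy
    rcases le_total x y with h | h
    · exact key x y hx h
    · rw [abs_sub_comm, abs_sub_comm x y]; exact key y x hy h
  have hπmem : ∀ u : ℝ, 0 < u → cappedPremium μ Y u ∈ Icc 0 u := by
    intro u hu
    constructor
    · exact hπnn 0 u
    · have := hπbd 0 u hu.le; rw [cappedPremium]; linarith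
  obtain ⟨M₀, hM₀⟩ := hLbdd
  obtain ⟨M₁, hM₁⟩ := hL'bdd
  have hM₁0 : 0 ≤ M₁ := le_trans (abs_nonneg _) (hM₁ 0)
  have hM₀0 : 0 ≤ M₀ := le_trans (abs_nonneg _) (hM₀ 0)
  -- the transformed integrand
  set F : ℝ → ℝ → ℝ := fun x t => p t * L (min t x / t - f (cappedPremium μ Y x)) with hF
  -- rewrite the objective as an integral over (0, ∞)
  have hobj : ∀ x : ℝ, cappedObjective μ Y L f x = ∫ t in Ioi (0:ℝ), F x t := by
    intro x
    have hm : Measurable fun y : ℝ => L (min y x / y - f (cappedPremium μ Y x)) :=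
      hL.continuous.measurable.comp
        (((measurable_id.min measurable_const).div measurable_id).sub measurable_const)
    rw [cappedObjective]
    have h1 : ∫ ω, L (min (Y ω) x / Y ω - f (cappedPremium μ Y x)) ∂μ
        = ∫ y, L (min y x / y - f (cappedPremium μ Y x)) ∂(μ.map Y) :=
      (integral_map hY.aemeasurable hm.aestronglyMeasurable).symm
    rw [h1, hdens]
    have h2 : ((volume.restrict (Ioi (0:ℝ))).withDensity fun t => ENNReal.ofReal (p t))
        = ((volume.restrict (Ioi (0:ℝ))).withDensity fun t => ((p t).toNNReal : ℝ≥0∞)) := rfl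
    have htn : AEMeasurable (fun t => (p t).toNNReal) (volume.restrict (Ioi (0:ℝ))) :=
      measurable_real_toNNReal.comp_aemeasurable hpmeas
    rw [h2, integral_withDensity_eq_integral_smul₀ htn _]
    apply integral_congr_ae
    filter_upwards with t
    rw [NNReal.smul_def, Real.coe_toNNReal _ (hpnn t), smul_eq_mul]
  -- bound on the derivative of f on a compact interval
  obtain ⟨Cf, hCf⟩ : ∃ C, ∀ x ∈ Icc (-(2*s)) (2*s), ‖deriv f x‖ ≤ C :=
    isCompact_Icc.exists_bound_of_continuousOn ((hf.continuous_deriv le_rfl).continuousOn)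
  have hCf0 : 0 ≤ Cf := le_trans (norm_nonneg _) (hCf 0 (by constructor <;> nlinarith))
  have hflip : ∀ a b : ℝ, a ∈ Icc (-(2*s)) (2*s) → b ∈ Icc (-(2*s)) (2*s) →
      |f a - f b| ≤ Cf * |a - b| := by
    intro a b ha hb
    have := (convex_Icc (-(2*s)) (2*s)).norm_image_sub_le_of_norm_deriv_le
      (fun x _ => (hf.differentiable one_ne_zero).differentiableAt) hCf hb ha
    simpa [Real.norm_eq_abs] using this
  have hLlip : ∀ a b : ℝ, |L a - L b| ≤ M₁ * |a - b| := by
    intro a b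
    have := convex_univ.norm_image_sub_le_of_norm_deriv_le (f := L)
      (fun x _ => (hL.differentiable one_ne_zero).differentiableAt)
      (fun x _ => by rw [Real.norm_eq_abs]; exact hM₁ x) (mem_univ b) (mem_univ a)
    simpa [Real.norm_eq_abs] using this
  have hminlip : ∀ a b c : ℝ, |min c a - min c b| ≤ |a - b| := by
    intro a b c
    have k1 := le_abs_self (a - b)
    have k2 := neg_abs_le (a - b)
    have k3 := abs_nonneg (a - b)
    rcases le_total c a with h1 | h1 <;> rcases le_total c b with h2 | h2
    · rw [min_eq_left h1, min_eq_left h2, sub_self, abs_zero]; exact k3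
    · rw [min_eq_left h1, min_eq_right h2, abs_le]; constructor <;> linarith
    · rw [min_eq_right h1, min_eq_left h2, abs_le]; constructor <;> linarith
    · rw [min_eq_right h1, min_eq_right h2]
  -- the pointwise derivative
  set F' : ℝ → ℝ := fun t =>
    (if t ≤ s then -(survival μ Y s * deriv f (cappedPremium μ Y s))
        * deriv L (1 - f (cappedPremium μ Y s))
      else deriv L (s / t - f (cappedPremium μ Y s))
        * (1 / t - survival μ Y s * deriv f (cappedPremium μ Y s))) * p t with hF'
  -- measurability facts
  have hFmeas : ∀ x : ℝ, AEStronglyMeasurable (F x) (volume.restrict (Ioi (0:ℝ))) := by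
    intro x
    apply (hpmeas.mul (Measurable.aemeasurable ?_)).aestronglyMeasurable
    exact hL.continuous.measurable.comp
      (((measurable_id.min measurable_const).div measurable_id).sub measurable_const)
  have hFint : Integrable (F s) (volume.restrict (Ioi (0:ℝ))) := by
    apply Integrable.mono' (hpint.const_mul M₀) (hFmeas s)
    refine ae_of_all _ fun t => ?_
    simp only [hF, Real.norm_eq_abs, abs_mul, abs_of_nonneg (hpnn t)]
    calc p t * |L (min t s / t - f (cappedPremium μ Y s))| ≤ p t * M₀ :=
          mul_le_mul_of_nonneg_left (hM₀ _) (hpnn t)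
      _ = M₀ * p t := mul_comm _ _
  have hF'meas : AEStronglyMeasurable F' (volume.restrict (Ioi (0:ℝ))) := by
    apply ((Measurable.aemeasurable ?_).mul hpmeas).aestronglyMeasurable
    apply Measurable.ite measurableSet_Iic measurable_const
    exact ((hL.continuous_deriv le_rfl).measurable.comp
      ((measurable_const.div measurable_id).sub measurable_const)).mul
      ((measurable_const.div measurable_id).sub measurable_const)
  -- Lipschitz control
  set K : ℝ := M₁ * (2 / s + Cf) with hK
  have hK0 : 0 ≤ K := mul_nonneg hM₁0 (by positivity)
  have hlip : ∀ᵐ t ∂(volume.restrict (Ioi (0:ℝ))),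
      LipschitzOnWith (Real.nnabs (K * p t)) (fun x => F x t) (ball s (s/2)) := by
    filter_upwards [ae_restrict_mem measurableSet_Ioi] with t ht
    rw [lipschitzOnWith_iff_dist_le_mul]
    intro x hx y hy
    rw [Real.ball_eq_Ioo] at hx hy
    obtain ⟨hx1, hx2⟩ := hx
    obtain ⟨hy1, hy2⟩ := hy
    have hx0 : 0 < x := by linarith
    have hy0 : 0 < y := by linarith
    have hπx := hπmem x hx0
    have hπy := hπmem y hy0
    have hmemx : cappedPremium μ Y x ∈ Icc (-(2*s)) (2*s) :=
      ⟨by nlinarith [hπx.1], by nlinarith [hπx.2]⟩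
    have hmemy : cappedPremium μ Y y ∈ Icc (-(2*s)) (2*s) :=
      ⟨by nlinarith [hπy.1], by nlinarith [hπy.2]⟩
    -- estimate on min-part
    have hmd : |min t x / t - min t y / t| ≤ (2 / s) * |x - y| := by
      rcases le_or_gt t (s/2) with h | h
      · have h1 : min t x = t := min_eq_left (by linarith)
        have h2 : min t y = t := min_eq_left (by linarith)
        rw [h1, h2, sub_self, abs_zero]
        positivity
      · have h1 : |min t x / t - min t y / t| = |min t x - min t y| / t := by
          rw [← sub_div, abs_div, abs_of_pos (lt_trans (by linarith) h)]
        rw [h1]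
        have h2 : |min t x - min t y| ≤ |x - y| := hminlip x y t
        have ht0 : (0:ℝ) < t := lt_trans (by linarith) h
        calc |min t x - min t y| / t ≤ |x - y| / t := by gcongr
          _ ≤ (2 / s) * |x - y| := by
              rw [div_le_iff₀ ht0]
              have h3 : 1 ≤ (2/s) * t := by
                rw [div_mul_eq_mul_div, le_div_iff₀ hs]; linarith
              nlinarith [abs_nonneg (x - y)]
    have hfd : |f (cappedPremium μ Y x) - f (cappedPremium μ Y y)| ≤ Cf * |x - y| :=
      le_trans (hflip _ _ hmemx hmemy)
        (mul_le_mul_of_nonneg_left (hπlip x y hx0 hy0) hCf0)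
    have hA : |(min t x / t - f (cappedPremium μ Y x))
        - (min t y / t - f (cappedPremium μ Y y))| ≤ (2/s + Cf) * |x - y| := by
      calc |(min t x / t - f (cappedPremium μ Y x)) - (min t y / t - f (cappedPremium μ Y y))|
          = |(min t x / t - min t y / t) -
              (f (cappedPremium μ Y x) - f (cappedPremium μ Y y))| := by ring_nf
        _ ≤ |min t x / t - min t y / t| +
              |f (cappedPremium μ Y x) - f (cappedPremium μ Y y)| := abs_sub _ _
        _ ≤ (2/s) * |x - y| + Cf * |x - y| := add_le_add hmd hfd
        _ = (2/s + Cf) * |x - y| := by ring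
    rw [Real.dist_eq, Real.dist_eq, Real.coe_nnabs,
      abs_of_nonneg (mul_nonneg hK0 (hpnn t))]
    calc |F x t - F y t| = p t * |L (min t x / t - f (cappedPremium μ Y x))
          - L (min t y / t - f (cappedPremium μ Y y))| := by
          simp only [hF]; rw [← mul_sub, abs_mul, abs_of_nonneg (hpnn t)]
      _ ≤ p t * (M₁ * ((2/s + Cf) * |x - y|)) := by
          apply mul_le_mul_of_nonneg_left _ (hpnn t)
          exact le_trans (hLlip _ _) (mul_le_mul_of_nonneg_left hA hM₁0)
      _ = K * p t * |x - y| := by rw [hK]; ring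
  have hbint : Integrable (fun t => K * p t) (volume.restrict (Ioi (0:ℝ))) :=
    hpint.const_mul K
  -- pointwise differentiability
  have hdiff : ∀ᵐ t ∂(volume.restrict (Ioi (0:ℝ))),
      HasDerivAt (fun x => F x t) (F' t) s := by
    have hzero : (volume.restrict (Ioi (0:ℝ))) {s} = 0 := by
      rw [Measure.restrict_apply (measurableSet_singleton s)]
      exact measure_mono_null inter_subset_left Real.volume_singleton
    have hne : ∀ᵐ t ∂(volume.restrict (Ioi (0:ℝ))), t ≠ s := by
      rw [ae_iff]
      convert hzero using 2
      ext t; simp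
    filter_upwards [ae_restrict_mem measurableSet_Ioi, hne] with t ht0 hts
    have hfd : HasDerivAt f (deriv f (cappedPremium μ Y s)) (cappedPremium μ Y s) :=
      ((hf.differentiable one_ne_zero) _).hasDerivAt
    have h1 : HasDerivAt (fun x => f (cappedPremium μ Y x))
        (deriv f (cappedPremium μ Y s) * survival μ Y s) s := hfd.comp s hπderiv
    rcases lt_or_gt_of_ne hts with h | h
    · -- t < s
      have h2 : HasDerivAt (fun x => 1 - f (cappedPremium μ Y x))
          (-(deriv f (cappedPremium μ Y s) * survival μ Y s)) s := by
        exact ((hasDerivAt_const s (1:ℝ)).sub h1).congr_deriv (zero_sub _)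
      have hLd : HasDerivAt L (deriv L (1 - f (cappedPremium μ Y s)))
          (1 - f (cappedPremium μ Y s)) := ((hL.differentiable one_ne_zero) _).hasDerivAt
      have h3 := (hLd.comp s h2).const_mul (p t)
      have h4 : HasDerivAt (fun x => F x t)
          (p t * (deriv L (1 - f (cappedPremium μ Y s))
            * -(deriv f (cappedPremium μ Y s) * survival μ Y s))) s := by
        apply h3.congr_of_eventuallyEq
        filter_upwards [Ioi_mem_nhds h] with x hx
        simp only [hF, Function.comp_apply]
        rw [min_eq_left (le_of_lt hx), div_self (ne_of_gt ht0)]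
      convert h4 using 1
      simp only [hF']; rw [if_pos h.le]
      ring
    · -- t > s
      have hdiv : HasDerivAt (fun x : ℝ => x / t) (1 / t) s := by
        simpa using (hasDerivAt_id s).div_const t
      have h2 : HasDerivAt (fun x => x / t - f (cappedPremium μ Y x))
          (1 / t - deriv f (cappedPremium μ Y s) * survival μ Y s) s := hdiv.sub h1
      have hLd : HasDerivAt L (deriv L (s / t - f (cappedPremium μ Y s)))
          (s / t - f (cappedPremium μ Y s)) := ((hL.differentiable one_ne_zero) _).hasDerivAt
      have h3 := (hLd.comp s h2).const_mul (p t)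
      have h4 : HasDerivAt (fun x => F x t)
          (p t * (deriv L (s / t - f (cappedPremium μ Y s))
            * (1 / t - deriv f (cappedPremium μ Y s) * survival μ Y s))) s := by
        apply h3.congr_of_eventuallyEq
        filter_upwards [Iio_mem_nhds h] with x hx
        simp only [hF, Function.comp_apply]
        rw [min_eq_right (le_of_lt hx)]
      convert h4 using 1
      simp only [hF']; rw [if_neg (not_le.2 h)]
      ring
  -- main application
  have key := hasDerivAt_integral_of_dominated_loc_of_lip (μ := volume.restrict (Ioi (0:ℝ)))
    (F := F) (F' := F') (x₀ := s) (s := ball s (s/2)) (bound := fun t => K * p t)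
    (ball_mem_nhds s (half_pos hs)) (Filter.Eventually.of_forall hFmeas) hFint hF'meas hlip hbint hdiff
  have hfun : cappedObjective μ Y L f = fun x => ∫ t in Ioi (0:ℝ), F x t := funext hobj
  rw [hfun]
  convert key.2 using 1
  case e'_4 => rfl
  case e'_5 => rfl
  -- compute ∫ F'
  have k1 : IntegrableOn F' (Ioi (0:ℝ)) volume := key.1
  have hint1 : IntegrableOn F' (Ioc 0 s) volume := k1.mono_set Ioc_subset_Ioi_self
  have hint2 : IntegrableOn F' (Ioi s) volume := k1.mono_set (Ioi_subset_Ioi hs.le)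
  have hsplitF : ∫ t in Ioi (0:ℝ), F' t = (∫ t in Ioc 0 s, F' t) + ∫ t in Ioi s, F' t := by
    rw [← Ioc_union_Ioi_eq_Ioi hs.le]
    exact setIntegral_union (Ioc_disjoint_Ioi le_rfl) measurableSet_Ioi hint1 hint2
  have hIoc : ∫ t in Ioc 0 s, F' t
      = -(survival μ Y s * deriv f (cappedPremium μ Y s))
          * deriv L (1 - f (cappedPremium μ Y s)) * (1 - survival μ Y s) := by
    have h1 : ∫ t in Ioc 0 s, F' t = ∫ t in Ioc 0 s,
        (-(survival μ Y s * deriv f (cappedPremium μ Y s))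
          * deriv L (1 - f (cappedPremium μ Y s))) * p t := by
      apply setIntegral_congr_fun measurableSet_Ioc
      intro t ht
      simp only [hF']; rw [if_pos ht.2]
    rw [h1, integral_const_mul]
    have h2 : ∫ t in Ioc 0 s, p t = 1 - survival μ Y s := by
      have := hsplit s hs
      rw [hsurv s hs.le]
      linarith
    rw [h2]
  have hIoi : ∫ t in Ioi s, F' t = ∫ t in Ioi s,
      deriv L (s / t - f (cappedPremium μ Y s))
        * (1 / t - survival μ Y s * deriv f (cappedPremium μ Y s)) * p t := by
    apply setIntegral_congr_fun measurableSet_Ioi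
    intro t ht
    simp only [hF']; rw [if_neg (not_le.2 ht)]
  rw [hsplitF, hIoc, hIoi]
  ring
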